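/- Let A be an N×N reaction matrix with strongly connected graph, X_∞ > 0 with A X_∞ = 0, and let F = diag(f_1,...,f_N) be a nonnegative diagonal matrix with f_{k_0} > 0 for some k_0. Then there exists λ > 0 such that for all v ∈ ℝ^N: ∑_{1 ≤ k < ℓ ≤ N} (a_{kℓ} v_{ℓ,∞} + a_{ℓk} v_{k,∞})(v_k/v_{k,∞} - v_ℓ/v_{ℓ,∞})² + 2 ∑_{k=1}^N f_k v_k² / v_{k,∞} ≥ λ ∑_{k=1}^N v_k² / v_{k,∞}. Consequently, every solution of V' = (A - F)V satisfies ∑_k v_k(t)²/v_{k,∞} ≤ e^{-λ t} ∑_k v_k(0)²/v_{k,∞}, i.e., solutions of a source component decay exponentially to zero. -/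

import Mathlib

open Finset

-- swap lemma
lemma aux_swap {N : ℕ} (F : Fin N → Fin N → ℝ) :
    ∑ k, ∑ l ∈ Finset.univ.filter (fun l => l < k), F k l
      = ∑ k, ∑ l ∈ Finset.univ.filter (fun l => k < l), F l k := by
  simp only [Finset.sum_filter]
  rw [Finset.sum_comm]

lemma aux_split {N : ℕ} (F : Fin N → Fin N → ℝ) :
    ∑ k, ∑ l, F k l
      = (∑ k, ∑ l ∈ Finset.univ.filter (fun l => k < l), (F k l + F l k)) + ∑ k, F k k := by
  have pt : ∀ k l : Fin N, F k l =
      (if k < l then F k l else 0) + (if l < k then F k l else 0) + (if l = k then F k l else 0) := by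
    intro k l
    rcases lt_trichotomy k l with h | h | h
    · simp [h, asymm h, h.ne']
    · simp [h, lt_irrefl]
    · simp [h, asymm h, h.ne]
  calc ∑ k, ∑ l, F k l
      = ∑ k, ∑ l, ((if k < l then F k l else 0) + (if l < k then F k l else 0)
          + (if l = k then F k l else 0)) := by
        refine Finset.sum_congr rfl fun k _ => Finset.sum_congr rfl fun l _ => pt k l
    _ = (∑ k, ∑ l ∈ Finset.univ.filter (fun l => k < l), F k l)
        + (∑ k, ∑ l ∈ Finset.univ.filter (fun l => l < k), F k l) + ∑ k, F k k := by
        simp [Finset.sum_add_distrib, Finset.sum_filter, Finset.sum_ite_eq']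
    _ = _ := by
        rw [aux_swap F, ← Finset.sum_add_distrib]
        congr 1
        refine Finset.sum_congr rfl fun k _ => ?_
        rw [← Finset.sum_add_distrib]

lemma aux_key {N : ℕ} (A : Matrix (Fin N) (Fin N) ℝ) (hcol : ∀ j, ∑ i, A i j = 0)
    (vinf : Fin N → ℝ) (hvinf : ∀ k, 0 < vinf k) (heq : A.mulVec vinf = 0)
    (v : Fin N → ℝ) :
    ∑ k, ∑ l ∈ Finset.univ.filter (fun l => k < l),
        (A k l * vinf l + A l k * vinf k) * (v k / vinf k - v l / vinf l) ^ 2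
      = -2 * ∑ k, v k * (A.mulVec v) k / vinf k := by
  set w : Fin N → ℝ := fun k => v k / vinf k with hw
  have hv : ∀ k, v k = w k * vinf k := fun k => (div_mul_cancel₀ (v k) (hvinf k).ne').symm
  set G : Fin N → Fin N → ℝ := fun k l => (A k l * vinf l) * (w k - w l) ^ 2 with hG
  have hrow : ∀ k, ∑ l, A k l * vinf l = 0 := by
    intro k
    have := congrFun heq k
    simpa [Matrix.mulVec, dotProduct] using this
  have hmv : ∀ k, (A.mulVec v) k = ∑ l, A k l * v l := by
    intro k; simp [Matrix.mulVec, dotProduct]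
  have h1 : ∑ k, ∑ l ∈ Finset.univ.filter (fun l => k < l),
        (A k l * vinf l + A l k * vinf k) * (v k / vinf k - v l / vinf l) ^ 2
      = ∑ k, ∑ l ∈ Finset.univ.filter (fun l => k < l), (G k l + G l k) := by
    refine Finset.sum_congr rfl fun k _ => Finset.sum_congr rfl fun l _ => ?_
    simp only [hG, hw]
    ring
  have h2 : ∑ k, ∑ l, G k l
      = (∑ k, ∑ l ∈ Finset.univ.filter (fun l => k < l), (G k l + G l k)) := by
    rw [aux_split G]
    simp [hG]
  -- per-k expansion
  have h3 : ∀ k, ∑ l, G k l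
      = (∑ l, (vinf l * w l ^ 2) * A k l) - 2 * (w k * ∑ l, A k l * v l) := by
    intro k
    have e1 : ∑ l, G k l
        = ∑ l, ((A k l * vinf l) * w k ^ 2 + ((vinf l * w l ^ 2) * A k l
            - 2 * (w k * (A k l * v l)))) := by
      refine Finset.sum_congr rfl fun l _ => ?_
      simp only [hG]
      rw [hv l]
      ring
    rw [e1, Finset.sum_add_distrib, Finset.sum_sub_distrib]
    rw [← Finset.sum_mul, hrow k, zero_mul, zero_add, ← Finset.mul_sum, ← Finset.mul_sum]
  have h4 : ∑ k, ∑ l, G k l = -2 * ∑ k, w k * ∑ l, A k l * v l := by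
    rw [Finset.sum_congr rfl fun k _ => h3 k, Finset.sum_sub_distrib]
    rw [Finset.sum_comm]
    have : ∀ l : Fin N, ∑ k, (vinf l * w l ^ 2) * A k l = 0 := by
      intro l; rw [← Finset.mul_sum, hcol l, mul_zero]
    rw [Finset.sum_congr rfl fun l _ => this l]
    simp [Finset.mul_sum]
  rw [h1, ← h2, h4]
  congr 1
  refine Finset.sum_congr rfl fun k _ => ?_
  rw [hmv k, hw]
  ring

section
variable {N : ℕ} (A : Matrix (Fin N) (Fin N) ℝ) (vinf f : Fin N → ℝ)

noncomputable def Qform (v : Fin N → ℝ) : ℝ :=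
  ∑ k, ∑ l ∈ Finset.univ.filter (fun l => k < l),
      (A k l * vinf l + A l k * vinf k) * (v k / vinf k - v l / vinf l) ^ 2 +
    2 * ∑ k, f k * (v k) ^ 2 / vinf k

noncomputable def Eform (v : Fin N → ℝ) : ℝ := ∑ k, (v k) ^ 2 / vinf k

lemma Eform_nonneg (hvinf : ∀ k, 0 < vinf k) (v : Fin N → ℝ) : 0 ≤ Eform vinf v :=
  Finset.sum_nonneg fun k _ => div_nonneg (sq_nonneg _) (hvinf k).le

lemma Eform_pos (hvinf : ∀ k, 0 < vinf k) {v : Fin N → ℝ} (hv : v ≠ 0) :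
    0 < Eform vinf v := by
  obtain ⟨k, hk⟩ : ∃ k, v k ≠ 0 := by
    by_contra h
    push_neg at h
    exact hv (funext h)
  refine Finset.sum_pos' (fun k _ => div_nonneg (sq_nonneg _) (hvinf k).le) ⟨k, Finset.mem_univ k, ?_⟩
  exact div_pos (by positivity) (hvinf k)

lemma Qform_nonneg (hoff : ∀ i j, i ≠ j → 0 ≤ A i j) (hvinf : ∀ k, 0 < vinf k)
    (hf : ∀ k, 0 ≤ f k) (v : Fin N → ℝ) :
    0 ≤ ∑ k, ∑ l ∈ Finset.univ.filter (fun l => k < l),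
      (A k l * vinf l + A l k * vinf k) * (v k / vinf k - v l / vinf l) ^ 2 ∧
    0 ≤ ∑ k, f k * (v k) ^ 2 / vinf k := by
  constructor
  · refine Finset.sum_nonneg fun k _ => Finset.sum_nonneg fun l hl => ?_
    have hkl : k < l := (Finset.mem_filter.mp hl).2
    have : 0 ≤ A k l * vinf l + A l k * vinf k :=
      add_nonneg (mul_nonneg (hoff _ _ hkl.ne) (hvinf l).le)
        (mul_nonneg (hoff _ _ hkl.ne') (hvinf k).le)
    exact mul_nonneg this (sq_nonneg _)
  · exact Finset.sum_nonneg fun k _ =>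
      div_nonneg (mul_nonneg (hf k) (sq_nonneg _)) (hvinf k).le

lemma Qform_pos (hoff : ∀ i j, i ≠ j → 0 ≤ A i j)
    (hconn : ∀ u v : Fin N, Relation.ReflTransGen (fun x y => x ≠ y ∧ 0 < A y x) u v)
    (hvinf : ∀ k, 0 < vinf k) (hf : ∀ k, 0 ≤ f k) (hf0 : ∃ k₀, 0 < f k₀)
    {v : Fin N → ℝ} (hv : v ≠ 0) : 0 < Qform A vinf f v := by
  obtain ⟨h1, h2⟩ := Qform_nonneg A vinf f hoff hvinf hf v
  rcases lt_or_eq_of_le (add_nonneg h1 (by linarith) :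
      (0:ℝ) ≤ Qform A vinf f v) with h | h
  · exact h
  exfalso
  -- Qform v = 0
  have hS1 : ∑ k, ∑ l ∈ Finset.univ.filter (fun l => k < l),
      (A k l * vinf l + A l k * vinf k) * (v k / vinf k - v l / vinf l) ^ 2 = 0 := by
    linarith
  have hS2 : ∑ k, f k * (v k) ^ 2 / vinf k = 0 := by
    linarith
  -- each pair term zero
  have hterm : ∀ k l : Fin N, k < l →
      (A k l * vinf l + A l k * vinf k) * (v k / vinf k - v l / vinf l) ^ 2 = 0 := by
    intro k l hkl
    have hin : ∀ k : Fin N, 0 ≤ ∑ l ∈ Finset.univ.filter (fun l => k < l),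
        (A k l * vinf l + A l k * vinf k) * (v k / vinf k - v l / vinf l) ^ 2 := by
      intro k
      refine Finset.sum_nonneg fun l hl => ?_
      have hkl : k < l := (Finset.mem_filter.mp hl).2
      exact mul_nonneg (add_nonneg (mul_nonneg (hoff _ _ hkl.ne) (hvinf l).le)
        (mul_nonneg (hoff _ _ hkl.ne') (hvinf k).le)) (sq_nonneg _)
    have houter := (Finset.sum_eq_zero_iff_of_nonneg (fun k _ => hin k)).mp hS1 k (Finset.mem_univ k)
    have hinner := (Finset.sum_eq_zero_iff_of_nonneg ?_).mp houter l (by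
      simp [Finset.mem_filter, hkl])
    · exact hinner
    · intro l hl
      have hkl : k < l := (Finset.mem_filter.mp hl).2
      exact mul_nonneg (add_nonneg (mul_nonneg (hoff _ _ hkl.ne) (hvinf l).le)
        (mul_nonneg (hoff _ _ hkl.ne') (hvinf k).le)) (sq_nonneg _)
  -- edge implies equal ratio
  have hstep : ∀ x y : Fin N, x ≠ y → 0 < A y x → v x / vinf x = v y / vinf y := by
    intro x y hxy hA
    rcases lt_or_gt_of_ne hxy with h | h
    · have := hterm x y h
      have hc : 0 < A x y * vinf y + A y x * vinf x :=
        add_pos_of_nonneg_of_pos (mul_nonneg (hoff _ _ hxy) (hvinf y).le)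
          (mul_pos hA (hvinf x))
      have := (mul_eq_zero.mp this).resolve_left hc.ne'
      have := pow_eq_zero_iff (n := 2) (by norm_num) |>.mp this
      linarith [sub_eq_zero.mp this]
    · have := hterm y x h
      have hc : 0 < A y x * vinf x + A x y * vinf y :=
        add_pos_of_pos_of_nonneg (mul_pos hA (hvinf x))
          (mul_nonneg (hoff _ _ hxy) (hvinf y).le)
      have := (mul_eq_zero.mp this).resolve_left hc.ne'
      have := pow_eq_zero_iff (n := 2) (by norm_num) |>.mp this
      linarith [sub_eq_zero.mp this]
  have hchain : ∀ u t : Fin N, v u / vinf u = v t / vinf t := by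
    intro u t
    induction hconn u t with
    | refl => rfl
    | tail hst h ih => exact ih.trans (hstep _ _ h.1 h.2)
  obtain ⟨k₀, hk₀⟩ := hf0
  have hvk₀ : v k₀ = 0 := by
    have := (Finset.sum_eq_zero_iff_of_nonneg (fun k _ =>
      div_nonneg (mul_nonneg (hf k) (sq_nonneg _)) (hvinf k).le)).mp hS2 k₀ (Finset.mem_univ k₀)
    have h2 := (div_eq_zero_iff.mp this).resolve_right (hvinf k₀).ne'
    have h3 := (mul_eq_zero.mp h2).resolve_left hk₀.ne'
    exact pow_eq_zero_iff (n := 2) (by norm_num) |>.mp h3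
  apply hv
  funext u
  have := hchain u k₀
  rw [hvk₀, zero_div, div_eq_zero_iff] at this
  exact this.resolve_right (hvinf u).ne'

lemma Qform_smul (hvinf : ∀ k, 0 < vinf k) (c : ℝ) (v : Fin N → ℝ) :
    Qform A vinf f (fun k => c * v k) = c ^ 2 * Qform A vinf f v := by
  unfold Qform
  rw [mul_add]
  congr 1
  · rw [Finset.mul_sum]
    refine Finset.sum_congr rfl fun k _ => ?_
    rw [Finset.mul_sum]
    refine Finset.sum_congr rfl fun l _ => ?_
    have h1 := (hvinf k).ne'
    have h2 := (hvinf l).ne'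
    field_simp
  · rw [mul_left_comm]
    congr 1
    rw [Finset.mul_sum]
    refine Finset.sum_congr rfl fun k _ => ?_
    have h1 := (hvinf k).ne'
    field_simp

lemma Eform_smul (c : ℝ) (v : Fin N → ℝ) :
    Eform vinf (fun k => c * v k) = c ^ 2 * Eform vinf v := by
  unfold Eform
  rw [Finset.mul_sum]
  refine Finset.sum_congr rfl fun k _ => ?_
  rw [mul_pow, mul_div_assoc]

lemma Qform_continuous : Continuous (Qform A vinf f) := by
  unfold Qform
  refine Continuous.add ?_ (continuous_const.mul ?_)
  · refine continuous_finset_sum _ fun k _ => continuous_finset_sum _ fun l _ => ?_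
    exact continuous_const.mul
      ((((continuous_apply k).div_const _).sub ((continuous_apply l).div_const _)).pow 2)
  · exact continuous_finset_sum _ fun k _ =>
      (continuous_const.mul ((continuous_apply k).pow 2)).div_const _

lemma Eform_continuous : Continuous (Eform vinf) := by
  unfold Eform
  exact continuous_finset_sum _ fun k _ => ((continuous_apply k).pow 2).div_const _

end


theorem source_component_exponential_decay
    (N : ℕ) (A : Matrix (Fin N) (Fin N) ℝ)
    (hoff : ∀ i j, i ≠ j → 0 ≤ A i j)
    (hcol : ∀ j, ∑ i, A i j = 0)
    (hconn : ∀ u v : Fin N, Relation.ReflTransGen (fun x y => x ≠ y ∧ 0 < A y x) u v)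
    (vinf : Fin N → ℝ) (hvinf : ∀ k, 0 < vinf k) (heq : A.mulVec vinf = 0)
    (f : Fin N → ℝ) (hf : ∀ k, 0 ≤ f k) (hf0 : ∃ k₀, 0 < f k₀) :
    ∃ lam > 0,
      (∀ v : Fin N → ℝ,
        ∑ k, ∑ l ∈ Finset.univ.filter (fun l => k < l),
            (A k l * vinf l + A l k * vinf k) * (v k / vinf k - v l / vinf l) ^ 2 +
          2 * ∑ k, f k * (v k) ^ 2 / vinf k ≥
        lam * ∑ k, (v k) ^ 2 / vinf k) ∧
      (∀ V : ℝ → Fin N → ℝ,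
        (∀ k t, HasDerivAt (fun s => V s k)
          (((A - Matrix.diagonal f).mulVec (V t)) k) t) →
        ∀ t ≥ (0 : ℝ),
          ∑ k, (V t k) ^ 2 / vinf k ≤
            Real.exp (-lam * t) * ∑ k, (V 0 k) ^ 2 / vinf k) := by
  obtain ⟨k₀, hk₀⟩ := hf0
  haveI : Nonempty (Fin N) := ⟨k₀⟩
  set S := Metric.sphere (0 : Fin N → ℝ) 1 with hS
  have hSc : IsCompact S := isCompact_sphere 0 1
  have hSne : S.Nonempty := NormedSpace.sphere_nonempty.mpr zero_le_one
  obtain ⟨u₀, hu₀, hmin⟩ := hSc.exists_isMinOn hSne (Qform_continuous A vinf f).continuousOn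
  obtain ⟨u₁, hu₁, hmax⟩ := hSc.exists_isMaxOn hSne (Eform_continuous vinf).continuousOn
  have hu₀ne : u₀ ≠ 0 := by
    intro h
    have := mem_sphere_zero_iff_norm.mp hu₀
    rw [h] at this; simp at this
  have hm : 0 < Qform A vinf f u₀ := Qform_pos A vinf f hoff hconn hvinf hf ⟨k₀, hk₀⟩ hu₀ne
  have hM : 0 < Eform vinf u₁ := lt_of_lt_of_le (Eform_pos vinf hvinf hu₀ne) (hmax hu₀)
  set lam := Qform A vinf f u₀ / Eform vinf u₁ with hlam
  have hlampos : 0 < lam := div_pos hm hM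
  have hquad : ∀ v : Fin N → ℝ, Qform A vinf f v ≥ lam * Eform vinf v := by
    intro v
    by_cases hv : v = 0
    · subst hv
      simp [Qform, Eform]
    · set c := ‖v‖ with hc
      have hcpos : 0 < c := norm_pos_iff.mpr hv
      set u := c⁻¹ • v with hu
      have huS : u ∈ S := by
        rw [hS, mem_sphere_zero_iff_norm, hu, norm_smul]
        simp [hc, abs_of_pos (inv_pos.mpr hcpos), inv_mul_cancel₀ hcpos.ne']
        exact inv_mul_cancel₀ (norm_ne_zero_iff.mpr hv)
      have hvu : v = fun k => c * u k := by
        funext k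
        simp [hu, ← mul_assoc, mul_inv_cancel₀ hcpos.ne']
      have e1 : Qform A vinf f v = c ^ 2 * Qform A vinf f u := by
        rw [hvu]; exact Qform_smul A vinf f hvinf c u
      have e2 : Eform vinf v = c ^ 2 * Eform vinf u := by
        rw [hvu]; exact Eform_smul vinf c u
      have h3 : Qform A vinf f u₀ ≤ Qform A vinf f u := hmin huS
      have h4 : Eform vinf u ≤ Eform vinf u₁ := hmax huS
      have h5 : 0 ≤ Eform vinf u := Eform_nonneg vinf hvinf u
      have key : lam * (c ^ 2 * Eform vinf u) ≤ c ^ 2 * Qform A vinf f u₀ := by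
        rw [hlam, div_mul_eq_mul_div, div_le_iff₀ hM]
        have hx := mul_nonneg (mul_nonneg hm.le (sq_nonneg c)) (sub_nonneg.mpr h4)
        nlinarith [hx]
      calc lam * Eform vinf v = lam * (c ^ 2 * Eform vinf u) := by rw [e2]
        _ ≤ c ^ 2 * Qform A vinf f u₀ := key
        _ ≤ c ^ 2 * Qform A vinf f u := by nlinarith [sq_nonneg c, mul_nonneg (sq_nonneg c) (sub_nonneg.mpr h3)]
        _ = Qform A vinf f v := e1.symm
  refine ⟨lam, hlampos, fun v => hquad v, ?_⟩
  intro V hV t ht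
  set d : ℝ → ℝ := fun s => ∑ k,
      ((2 : ℕ) * V s k ^ (2 - 1) * ((A - Matrix.diagonal f).mulVec (V s)) k) / vinf k with hd
  have hφ : ∀ s, HasDerivAt (fun s => Eform vinf (V s)) (d s) s := by
    intro s
    exact HasDerivAt.fun_sum fun k _ => ((hV k s).pow 2).div_const (vinf k)
  have hdval : ∀ s, d s = -(Qform A vinf f (V s)) := by
    intro s
    have e1 : d s = 2 * (∑ k, V s k * (A.mulVec (V s)) k / vinf k)
        - 2 * ∑ k, f k * (V s k) ^ 2 / vinf k := by
      rw [hd]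
      simp only [Matrix.sub_mulVec, Pi.sub_apply, Matrix.mulVec_diagonal]
      rw [Finset.mul_sum, Finset.mul_sum, ← Finset.sum_sub_distrib]
      refine Finset.sum_congr rfl fun k _ => ?_
      push_cast
      ring
    rw [e1, Qform]
    have := aux_key A hcol vinf hvinf heq (V s)
    linarith
  have hdle : ∀ s, d s ≤ -lam * Eform vinf (V s) := by
    intro s
    rw [hdval s]
    have := hquad (V s)
    linarith
  set ψ : ℝ → ℝ := fun s => Real.exp (lam * s) * Eform vinf (V s) with hψ
  have hψ' : ∀ s, HasDerivAt ψ
      (Real.exp (lam * s) * (lam * 1) * Eform vinf (V s) + Real.exp (lam * s) * d s) s := by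
    intro s
    exact (((hasDerivAt_id s).const_mul lam).exp).mul (hφ s)
  have hψle : ∀ s, Real.exp (lam * s) * (lam * 1) * Eform vinf (V s)
      + Real.exp (lam * s) * d s ≤ 0 := by
    intro s
    have h0 : lam * Eform vinf (V s) + d s ≤ 0 := by
      have := hdle s; linarith
    have : Real.exp (lam * s) * (lam * 1) * Eform vinf (V s) + Real.exp (lam * s) * d s
        = Real.exp (lam * s) * (lam * Eform vinf (V s) + d s) := by ring
    rw [this]
    exact mul_nonpos_iff.mpr (Or.inl ⟨(Real.exp_pos _).le, h0⟩)
  have hanti : Antitone ψ := by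
    refine antitone_of_deriv_nonpos (fun s => (hψ' s).differentiableAt) fun s => ?_
    rw [(hψ' s).deriv]
    exact hψle s
  have hkey : Real.exp (lam * t) * Eform vinf (V t) ≤ Eform vinf (V 0) := by
    have := hanti ht
    simpa [hψ] using this
  show Eform vinf (V t) ≤ Real.exp (-lam * t) * Eform vinf (V 0)
  calc Eform vinf (V t)
      = Real.exp (-lam * t) * (Real.exp (lam * t) * Eform vinf (V t)) := by
        rw [← mul_assoc, ← Real.exp_add]
        ring_nf
        simp
    _ ≤ Real.exp (-lam * t) * Eform vinf (V 0) :=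
        mul_le_mul_of_nonneg_left hkey (Real.exp_nonneg _)
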